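/- Lazy equivalence is transitive with extended reduction for terms: if L₁ and L₂ are lazily equivalent at level 0 with respect to T₁, and T₁ reduces to T₂ in one extended parallel step in L₂, then T₁ reduces to T₂ in one extended parallel step in L₁. -/
import Mathlib


inductive Bk | abbr | abst
deriving DecidableEq

inductive Fk | appl | cast
deriving DecidableEq

inductive Tm
| sort : Nat → Tm
| lref : Nat → Tm
| bind : Bk → Tm → Tm → Tm
| flat : Fk → Tm → Tm → Tm
deriving DecidableEq

inductive Lift : Nat → Nat → Tm → Tm → Prop
| sort (l m k) : Lift l m (.sort k) (.sort k)
| lt {l m i} : i < l → Lift l m (.lref i) (.lref i)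
| ge {l m i} : l ≤ i → Lift l m (.lref i) (.lref (i + m))
| bind {l m b W₁ W₂ T₁ T₂} : Lift l m W₁ W₂ → Lift (l + 1) m T₁ T₂ →
    Lift l m (.bind b W₁ T₁) (.bind b W₂ T₂)
| flat {l m f V₁ V₂ T₁ T₂} : Lift l m V₁ V₂ → Lift l m T₁ T₂ →
    Lift l m (.flat f V₁ T₁) (.flat f V₂ T₂)

inductive Env
| null : Env
| pair : Env → Bk → Tm → Env
deriving DecidableEq

inductive Drop : Nat → Nat → Env → Env → Prop
| atom (l) : Drop l 0 .null .null
| pair {L₁ L₂ b W} : Drop 0 0 L₁ L₂ → Drop 0 0 (.pair L₁ b W) (.pair L₂ b W)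
| drop {m L₁ L₂ b W} : Drop 0 m L₁ L₂ → Drop 0 (m + 1) (.pair L₁ b W) L₂
| skip {l m L₁ L₂ b W₁ W₂} : Drop l m L₁ L₂ → Lift l m W₂ W₁ →
    Drop (l + 1) m (.pair L₁ b W₁) (.pair L₂ b W₂)

inductive Cpx (h g : Nat → Nat) : Env → Tm → Tm → Prop
| sort {L k} : Cpx h g L (.sort k) (.sort k)
| lref {L i} : Cpx h g L (.lref i) (.lref i)
| st {L k d} : g k = d + 1 → Cpx h g L (.sort k) (.sort (h k))
| bind {L b W₁ W₂ T₁ T₂} : Cpx h g L W₁ W₂ → Cpx h g (.pair L b W₁) T₁ T₂ →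
    Cpx h g L (.bind b W₁ T₁) (.bind b W₂ T₂)
| flat {L f V₁ V₂ T₁ T₂} : Cpx h g L V₁ V₂ → Cpx h g L T₁ T₂ →
    Cpx h g L (.flat f V₁ T₁) (.flat f V₂ T₂)
| delta {L K b W₁ W₂ V₂ i} : Drop 0 i L (.pair K b W₁) → Cpx h g K W₁ W₂ →
    Lift 0 (i + 1) W₂ V₂ → Cpx h g L (.lref i) V₂
| beta {L V₁ V₂ W₁ W₂ T₁ T₂} : Cpx h g L V₁ V₂ → Cpx h g L W₁ W₂ →
    Cpx h g (.pair L .abst W₁) T₁ T₂ →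
    Cpx h g L (.flat .appl V₁ (.bind .abst W₁ T₁))
      (.bind .abbr (.flat .cast W₂ V₂) T₂)
| zeta {L V U₁ U₂ T₂} : Cpx h g (.pair L .abbr V) U₁ U₂ → Lift 0 1 T₂ U₂ →
    Cpx h g L (.bind .abbr V U₁) T₂
| eps {L U T₁ T₂} : Cpx h g L T₁ T₂ → Cpx h g L (.flat .cast U T₁) T₂
| ee {L U₁ U₂ T} : Cpx h g L U₁ U₂ → Cpx h g L (.flat .cast U₁ T) U₂
| theta {L V₁ V₂ W₂ U₁ U₂ T₁ T₂} : Cpx h g L V₁ V₂ → Lift 0 1 V₂ W₂ →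
    Cpx h g L U₁ U₂ → Cpx h g (.pair L .abbr U₁) T₁ T₂ →
    Cpx h g L (.flat .appl V₁ (.bind .abbr U₁ T₁))
      (.bind .abbr U₂ (.flat .appl W₂ T₂))

inductive Lpx (h g : Nat → Nat) : Env → Env → Prop
| atom : Lpx h g .null .null
| pair {L₁ L₂ b W₁ W₂} : Lpx h g L₁ L₂ → Cpx h g L₁ W₁ W₂ →
    Lpx h g (.pair L₁ b W₁) (.pair L₂ b W₂)

def elen : Env → Nat
| .null => 0
| .pair L _ _ => elen L + 1

inductive Lleq : Nat → Tm → Env → Env → Prop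
| sort {l k L₁ L₂} : elen L₁ = elen L₂ → Lleq l (.sort k) L₁ L₂
| skip {l i L₁ L₂} : elen L₁ = elen L₂ → i < l → Lleq l (.lref i) L₁ L₂
| free {l i L₁ L₂} : elen L₁ = elen L₂ → elen L₁ ≤ i → elen L₂ ≤ i →
    Lleq l (.lref i) L₁ L₂
| lref {l i L₁ L₂ K₁ K₂ b W} : l ≤ i →
    Drop 0 i L₁ (.pair K₁ b W) → Drop 0 i L₂ (.pair K₂ b W) →
    Lleq 0 W K₁ K₂ → Lleq l (.lref i) L₁ L₂
| bind {l b W T L₁ L₂} : Lleq l W L₁ L₂ →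
    Lleq (l + 1) T (.pair L₁ b W) (.pair L₂ b W) →
    Lleq l (.bind b W T) L₁ L₂
| flat {l f V T L₁ L₂} : Lleq l V L₁ L₂ → Lleq l T L₁ L₂ →
    Lleq l (.flat f V T) L₁ L₂

lemma drop_refl : ∀ L, Drop 0 0 L L := by
  intro L
  induction L with
  | null => exact .atom 0
  | pair L b W ih => exact .pair ih

lemma drop_fun' : ∀ {l i L X}, Drop l i L X → l = 0 → ∀ {Y}, Drop l i L Y → X = Y := by
  intro l i L X h1
  induction h1 with
  | atom => intro _ Y h2; cases h2; rfl
  | pair h ih =>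
    intro _ Y h2
    cases h2 with
    | pair h' => rw [ih rfl h']
  | drop h ih =>
    intro _ Y h2
    cases h2 with
    | drop h' => exact ih rfl h'
  | skip h _ ih => intro e; omega

lemma drop_lt : ∀ {l i L X}, Drop l i L X → l = 0 → ∀ {K b W}, X = .pair K b W → i < elen L := by
  intro l i L X h
  induction h with
  | atom => intro _ K b W e; cases e
  | pair h ih => intros; simp [elen]
  | drop h ih =>
    intro _ K b W e
    subst e
    have := ih rfl rfl
    simp [elen]; omega
  | skip h _ ih => intro e; omega

lemma lleq_lower {l' T M₁ M₂} (hle : Lleq l' T M₁ M₂) :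
    ∀ {l K₁ K₂ b W}, l' = l + 1 → Drop 0 l M₁ (.pair K₁ b W) →
      Drop 0 l M₂ (.pair K₂ b W) → Lleq 0 W K₁ K₂ → Lleq l T M₁ M₂ := by
  induction hle with
  | sort he => intro l K₁ K₂ b W e d₁ d₂ hw; exact .sort he
  | skip he hi =>
    intro l K₁ K₂ b W e d₁ d₂ hw
    subst e
    rename_i i _ _
    rcases Nat.lt_or_ge i l with hl | hl
    · exact .skip he hl
    · have : i = l := by omega
      subst this
      exact .lref (Nat.le_refl _) d₁ d₂ hw
  | free he h1 h2 => intro l K₁ K₂ b W e d₁ d₂ hw; exact .free he h1 h2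
  | lref hi d₁ d₂ hw ih =>
    intro l K₁ K₂ b W e d₁' d₂' hw'
    exact .lref (by omega) d₁ d₂ hw
  | bind hW hT ihW ihT =>
    intro l K₁ K₂ b W e d₁ d₂ hw
    subst e
    exact .bind (ihW rfl d₁ d₂ hw) (ihT rfl (d₁.drop) (d₂.drop) hw)
  | flat hV hT ihV ihT =>
    intro l K₁ K₂ b W e d₁ d₂ hw
    exact .flat (ihV e d₁ d₂ hw) (ihT e d₁ d₂ hw)

theorem lleq_cpx_trans {h g : Nat → Nat} {L₁ L₂ : Env} {T₁ T₂ : Tm}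
    (hq : Lleq 0 T₁ L₁ L₂) (hc : Cpx h g L₂ T₁ T₂) : Cpx h g L₁ T₁ T₂ := by
  revert hq
  induction hc generalizing L₁ with
  | sort => intro _; exact .sort
  | lref => intro _; exact .lref
  | st e => intro _; exact .st e
  | bind hW hT ihW ihT =>
    intro hq
    cases hq with
    | bind hqW hqT =>
      exact .bind (ihW hqW)
        (ihT (lleq_lower hqT rfl (drop_refl _) (drop_refl _) hqW))
  | flat hV hT ihV ihT =>
    intro hq
    cases hq with
    | flat a b => exact .flat (ihV a) (ihT b)
  | delta d hW hl ihW =>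
    intro hq
    cases hq with
    | skip _ hi => omega
    | free he h1 h2 =>
      have := drop_lt d rfl rfl
      omega
    | lref _ d₁ d₂ hq' =>
      have e := drop_fun' d₂ rfl d
      cases e
      exact Cpx.delta d₁ (ihW hq') hl
  | beta hV hW hT ihV ihW ihT =>
    intro hq
    cases hq with
    | flat hqV hqB =>
      cases hqB with
      | bind hqW hqT =>
        exact .beta (ihV hqV) (ihW hqW)
          (ihT (lleq_lower hqT rfl (drop_refl _) (drop_refl _) hqW))
  | zeta hU hl ihU =>
    intro hq
    cases hq with
    | bind hqV hqU =>
      exact .zeta (ihU (lleq_lower hqU rfl (drop_refl _) (drop_refl _) hqV)) hl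
  | eps hT ih =>
    intro hq
    cases hq with
    | flat _ b => exact .eps (ih b)
  | ee hU ih =>
    intro hq
    cases hq with
    | flat a _ => exact .ee (ih a)
  | theta hV hl hU hT ihV ihU ihT =>
    intro hq
    cases hq with
    | flat hqV hqB =>
      cases hqB with
      | bind hqU hqT =>
        exact .theta (ihV hqV) hl (ihU hqU)
          (ihT (lleq_lower hqT rfl (drop_refl _) (drop_refl _) hqU))
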